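/- Let K be a valued field, let B be an open ball of radius β (i.e., B = {y : |y − x₀| < β}), let α ≤ β and r be elements of the value group, and let f : B → K be an injective map such that for every x ∈ B, the image f({y : |y − x| < α}) is an open ball of radius r. Then f(B) ⊇ some open ball, and for every open ball B'' ⊆ f(B) of radius r, the preimage f^{-1}(B'') is an open ball of radius α; more precisely, f^{-1}(B'') = {y : |y − x| < α} for any x ∈ f^{-1}(B''). -/

import Mathlib

variable {K : Type*} [Field K] {Γ₀ : Type*} [LinearOrderedCommGroupWithZero Γ₀]

/-- Let `B` be the open ball of radius `β` around `x₀`, let `α ≤ β` and `r` be in the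
value group, and let `f` be injective on `B` and map every open subball of radius `α`
onto an open ball of radius `r`. Then `f(B)` contains an open ball of radius `r`, and
for every open ball `B''` of radius `r` inside `f(B)`, the preimage of `B''` in `B` is
`{y : |y − x| < α}` for any `x ∈ B` with `f(x) ∈ B''`. -/
theorem preimage_of_small_ball (v : Valuation K Γ₀) (α β r : Γ₀)
    (hα : α ≠ 0) (hβ : β ≠ 0) (hr : r ≠ 0) (hαβ : α ≤ β)
    (x₀ : K) (f : K → K)
    (hinj : Set.InjOn f {y : K | v (y - x₀) < β})
    (himg : ∀ x : K, v (x - x₀) < β →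
      ∃ z : K, f '' {y : K | v (y - x) < α} = {w : K | v (w - z) < r}) :
    (∃ z : K, {w : K | v (w - z) < r} ⊆ f '' {y : K | v (y - x₀) < β}) ∧
    (∀ z : K, {w : K | v (w - z) < r} ⊆ f '' {y : K | v (y - x₀) < β} →
      ∀ x : K, v (x - x₀) < β → v (f x - z) < r →
        {y : K | v (y - x₀) < β} ∩ f ⁻¹' {w : K | v (w - z) < r} =
          {y : K | v (y - x) < α}) := by
  -- ultrametric triangle inequality for strict bounds
  have tri : ∀ γ : Γ₀, ∀ a b c : K, v (a - b) < γ → v (b - c) < γ → v (a - c) < γ := by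
    intro γ a b c h1 h2
    have h : a - c = (a - b) + (b - c) := by ring
    rw [h]
    exact lt_of_le_of_lt (v.map_add _ _) (max_lt h1 h2)
  have h0β : v (x₀ - x₀) < β := by
    simp only [sub_self, map_zero]
    exact zero_lt_iff.2 hβ
  constructor
  · obtain ⟨z, hz⟩ := himg x₀ h0β
    refine ⟨z, ?_⟩
    rw [← hz]
    exact Set.image_mono (fun y hy => lt_of_lt_of_le hy hαβ)
  · intro z hzsub x hx hfxz
    obtain ⟨z', hz'⟩ := himg x hx
    have hfxz' : v (f x - z') < r := by
      have hx' : f x ∈ f '' {y : K | v (y - x) < α} :=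
        ⟨x, by simp only [Set.mem_setOf_eq, sub_self, map_zero]; exact zero_lt_iff.2 hα, rfl⟩
      rw [hz'] at hx'
      exact hx'
    have hiff : ∀ u : K, v (u - z) < r ↔ v (u - z') < r := by
      intro u
      have hzz' : v (z - z') < r := by
        have h1 : v (z - f x) < r := by rwa [Valuation.map_sub_swap] at hfxz
        exact tri r z (f x) z' h1 hfxz'
      have hz'z : v (z' - z) < r := by rwa [Valuation.map_sub_swap] at hzz'
      exact ⟨fun h => tri r u z z' h hzz', fun h => tri r u z' z h hz'z⟩
    ext y
    simp only [Set.mem_inter_iff, Set.mem_setOf_eq, Set.mem_preimage]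
    constructor
    · rintro ⟨hy, hfy⟩
      have hfy' : f y ∈ f '' {y : K | v (y - x) < α} := by
        rw [hz']
        exact (hiff _).1 hfy
      obtain ⟨y', hy', he⟩ := hfy'
      have hy'B : v (y' - x₀) < β :=
        tri β y' x x₀ (lt_of_lt_of_le hy' hαβ) hx
      have : y' = y := hinj hy'B hy he
      rwa [← this]
    · intro hy
      refine ⟨tri β y x x₀ (lt_of_lt_of_le hy hαβ) hx, ?_⟩
      have hm : f y ∈ f '' {y : K | v (y - x) < α} := ⟨y, hy, rfl⟩
      rw [hz'] at hm
      exact (hiff _).2 hm
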